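/- Let f be a rational function written as f = A·∏_{i=1}^{s}(z−a_i)^{m_i} / ∏_{j=1}^{t}(z−b_j)^{l_j} with A ≠ 0, all a_i, b_j distinct, m_i ≥ k and l_j ≥ 1. Then the k-th derivative has the form f^{(k)} = A·∏_i (z−a_i)^{m_i−k} · g_k(z) / ∏_j (z−b_j)^{l_j+k}, where g_k is a polynomial with deg(g_k) ≤ k(s+t−1) whose coefficient of z^{k(s+t−1)} equals (M−N)(M−N−1)⋯(M−N−k+1), with M = Σ m_i and N = Σ l_j. -/

import Mathlib

open Polynomial

lemma my_prod_pow_split {ι : Type*} (s : Finset ι) (c : ι → ℂ) (e : ι → ℕ)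
    (he : ∀ i ∈ s, 1 ≤ e i) :
    ∏ i ∈ s, (X - C (c i)) ^ (e i)
      = (∏ i ∈ s, (X - C (c i)) ^ (e i - 1)) * ∏ i ∈ s, (X - C (c i)) := by
  rw [← Finset.prod_mul_distrib]
  refine Finset.prod_congr rfl fun i hi => ?_
  rw [← pow_succ]
  congr 1
  have := he i hi
  omega

lemma my_derivative_finset_prod {ι : Type*} [DecidableEq ι] (s : Finset ι) (f : ι → ℂ[X]) :
    derivative (∏ i ∈ s, f i) = ∑ i ∈ s, (∏ j ∈ s.erase i, f j) * derivative (f i) := by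
  induction s using Finset.induction_on with
  | empty => simp
  | @insert a s h ih =>
    rw [Finset.prod_insert h, derivative_mul, ih, Finset.sum_insert h,
      Finset.erase_insert h, Finset.mul_sum]
    congr 1
    · ring
    refine Finset.sum_congr rfl fun i hi => ?_
    have hia : i ≠ a := fun hh => h (hh ▸ hi)
    rw [Finset.erase_insert_of_ne (Ne.symm hia),
      Finset.prod_insert (fun hh => h (Finset.mem_of_mem_erase hh))]
    ring

lemma my_deriv_prod_pow {ι : Type*} [DecidableEq ι] (s : Finset ι) (c : ι → ℂ) (e : ι → ℕ)
    (he : ∀ i ∈ s, 1 ≤ e i) :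
    derivative (∏ i ∈ s, (X - C (c i)) ^ (e i))
      = (∏ i ∈ s, (X - C (c i)) ^ (e i - 1))
        * ∑ i ∈ s, C ((e i : ℂ)) * ∏ j ∈ s.erase i, (X - C (c j)) := by
  rw [my_derivative_finset_prod, Finset.mul_sum]
  refine Finset.sum_congr rfl fun i hi => ?_
  rw [derivative_pow, derivative_sub, derivative_X, derivative_C, sub_zero, mul_one]
  have h1 : ∏ j ∈ s.erase i, (X - C (c j)) ^ (e j)
      = (∏ j ∈ s.erase i, (X - C (c j)) ^ (e j - 1)) * ∏ j ∈ s.erase i, (X - C (c j)) :=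
    my_prod_pow_split _ _ _ (fun j hj => he j (Finset.mem_of_mem_erase hj))
  have h2 : ∏ j ∈ s, (X - C (c j)) ^ (e j - 1)
      = (X - C (c i)) ^ (e i - 1) * ∏ j ∈ s.erase i, (X - C (c j)) ^ (e j - 1) :=
    (Finset.mul_prod_erase s _ hi).symm
  rw [h1, h2]
  ring

lemma my_sum_facts {ι : Type*} [Fintype ι] [DecidableEq ι] [Nonempty ι]
    (c : ι → ℂ) (w : ι → ℂ) :
    (∑ i, C (w i) * ∏ j ∈ Finset.univ.erase i, (X - C (c j))).natDegree
        ≤ Fintype.card ι - 1 ∧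
    (∑ i, C (w i) * ∏ j ∈ Finset.univ.erase i, (X - C (c j))).coeff (Fintype.card ι - 1)
        = ∑ i, w i := by
  have hE : ∀ i : ι, (∏ j ∈ Finset.univ.erase i, (X - C (c j))).natDegree
      = Fintype.card ι - 1 := by
    intro i
    rw [natDegree_prod _ _ (fun j _ => X_sub_C_ne_zero (c j))]
    simp [Finset.card_erase_of_mem]
  have hMon : ∀ i : ι, (∏ j ∈ Finset.univ.erase i, (X - C (c j))).Monic :=
    fun i => monic_prod_of_monic _ _ (fun j _ => monic_X_sub_C (c j))
  constructor
  · refine natDegree_sum_le_of_forall_le _ _ fun i _ => ?_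
    refine (natDegree_mul_le).trans ?_
    simp [natDegree_C, hE i]
  · rw [finset_sum_coeff]
    refine Finset.sum_congr rfl fun i _ => ?_
    rw [coeff_C_mul, ← hE i, (hMon i).coeff_natDegree, mul_one]

theorem stmt5 (k s t : ℕ) (hk : 1 ≤ k) (hs : 1 ≤ s) (ht : 1 ≤ t)
    (A : ℂ) (hA : A ≠ 0) (a : Fin s → ℂ) (b : Fin t → ℂ)
    (ha : Function.Injective a) (hb : Function.Injective b)
    (hab : ∀ i j, a i ≠ b j)
    (m : Fin s → ℕ) (hm : ∀ i, k ≤ m i) (l : Fin t → ℕ) (hl : ∀ j, 1 ≤ l j)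
    (f : ℂ → ℂ)
    (hf : ∀ z : ℂ, f z = A * (∏ i, (z - a i) ^ (m i)) / ∏ j, (z - b j) ^ (l j))
    (M N : ℕ) (hM : M = ∑ i, m i) (hN : N = ∑ j, l j) :
    ∃ g : ℂ[X], g.natDegree ≤ k * (s + t - 1) ∧
      g.coeff (k * (s + t - 1)) = ∏ i ∈ Finset.range k, ((M : ℂ) - (N : ℂ) - i) ∧
      ∀ z : ℂ, (∀ j, z ≠ b j) →
        iteratedDeriv k f z
          = A * (∏ i, (z - a i) ^ (m i - k)) * g.eval z / ∏ j, (z - b j) ^ (l j + k) := by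
  haveI : Nonempty (Fin s) := ⟨⟨0, hs⟩⟩
  haveI : Nonempty (Fin t) := ⟨⟨0, ht⟩⟩
  have hOpen : IsOpen {w : ℂ | ∀ j, w ≠ b j} := by
    have hset : {w : ℂ | ∀ j, w ≠ b j} = ⋂ j, {b j}ᶜ := by
      ext w; simp [Set.mem_iInter]
    rw [hset]
    exact isOpen_iInter_of_finite fun j => isOpen_compl_singleton
  have key : ∀ n : ℕ, n ≤ k → ∃ g : ℂ[X],
      g.natDegree ≤ n * (s + t - 1) ∧
      g.coeff (n * (s + t - 1)) = ∏ i ∈ Finset.range n, ((M : ℂ) - (N : ℂ) - i) ∧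
      ∀ z : ℂ, (∀ j, z ≠ b j) →
        iteratedDeriv n f z
          = A * (∏ i, (z - a i) ^ (m i - n)) * g.eval z / ∏ j, (z - b j) ^ (l j + n) := by
    intro n
    induction n with
    | zero =>
      intro _
      refine ⟨1, by simp, by simp, fun z hz => ?_⟩
      simp [iteratedDeriv_zero, hf z]
    | succ n ih =>
      intro hn1
      obtain ⟨g, hgdeg, hgcoeff, hgval⟩ := ih (Nat.le_of_succ_le hn1)
      clear ih
      have hmn : ∀ i, n + 1 ≤ m i := fun i => le_trans hn1 (hm i)
      set Apoly : ℂ[X] := ∏ i, (X - C (a i)) with hApoly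
      set Bpoly : ℂ[X] := ∏ j, (X - C (b j)) with hBpoly
      set T : ℂ[X] := ∑ i, C (((m i - n : ℕ) : ℂ)) * ∏ i' ∈ Finset.univ.erase i, (X - C (a i'))
        with hT
      set U : ℂ[X] := ∑ j, C (((l j + n : ℕ) : ℂ)) * ∏ j' ∈ Finset.univ.erase j, (X - C (b j'))
        with hU
      set g1 : ℂ[X] := T * g * Bpoly + Apoly * derivative g * Bpoly - Apoly * g * U with hg1
      have hAmon : Apoly.Monic := monic_prod_of_monic _ _ fun i _ => monic_X_sub_C _
      have hBmon : Bpoly.Monic := monic_prod_of_monic _ _ fun j _ => monic_X_sub_C _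
      have hAdeg : Apoly.natDegree = s := by
        rw [hApoly, natDegree_prod _ _ fun i _ => X_sub_C_ne_zero _]; simp
      have hBdeg : Bpoly.natDegree = t := by
        rw [hBpoly, natDegree_prod _ _ fun j _ => X_sub_C_ne_zero _]; simp
      have hAcoeff : Apoly.coeff s = 1 := by rw [← hAdeg]; exact hAmon.coeff_natDegree
      have hBcoeff : Bpoly.coeff t = 1 := by rw [← hBdeg]; exact hBmon.coeff_natDegree
      have hTfacts := my_sum_facts a (fun i => ((m i - n : ℕ) : ℂ))
      simp only [Fintype.card_fin] at hTfacts
      have hTdeg : T.natDegree ≤ s - 1 := by rw [hT]; exact hTfacts.1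
      have hTcoeff : T.coeff (s - 1) = ∑ i, ((m i - n : ℕ) : ℂ) := by rw [hT]; exact hTfacts.2
      have hUfacts := my_sum_facts b (fun j => ((l j + n : ℕ) : ℂ))
      simp only [Fintype.card_fin] at hUfacts
      have hUdeg : U.natDegree ≤ t - 1 := by rw [hU]; exact hUfacts.1
      have hUcoeff : U.coeff (t - 1) = ∑ j, ((l j + n : ℕ) : ℂ) := by rw [hU]; exact hUfacts.2
      set D := n * (s + t - 1) with hD
      have hDcase : derivative g = 0 ∨ 1 ≤ D := by
        by_cases hg0 : derivative g = 0
        · exact Or.inl hg0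
        · refine Or.inr ?_
          have h1 : 1 ≤ g.natDegree := by
            rcases Nat.eq_zero_or_pos g.natDegree with h | h
            · exact absurd (by rw [eq_C_of_natDegree_eq_zero h]; simp) hg0
            · exact h
          exact le_trans h1 hgdeg
      -- coefficient computations
      have h1 : (T * g * Bpoly).coeff (D + (s + t - 1))
          = (∑ i, ((m i - n : ℕ) : ℂ)) * g.coeff D := by
        have e1 : D + (s + t - 1) = ((s - 1) + D) + t := by omega
        rw [e1, coeff_mul_add_eq_of_natDegree_le (natDegree_mul_le.trans (add_le_add hTdeg hgdeg))
            hBdeg.le, coeff_mul_add_eq_of_natDegree_le hTdeg hgdeg, hTcoeff, hBcoeff]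
        ring
      have hgder_deg : (derivative g).natDegree ≤ D - 1 :=
        (natDegree_derivative_le g).trans (Nat.sub_le_sub_right hgdeg 1)
      have h2 : (Apoly * derivative g * Bpoly).coeff (D + (s + t - 1))
          = g.coeff D * (D : ℂ) := by
        rcases hDcase with hg0 | hD1
        · rw [hg0]
          simp only [mul_zero, zero_mul, coeff_zero]
          rcases Nat.eq_zero_or_pos D with h | h
          · simp [h]
          · have hnd : g.natDegree = 0 := natDegree_eq_zero_of_derivative_eq_zero hg0
            rw [coeff_eq_zero_of_natDegree_lt (by omega)]
            ring
        · have e2 : D + (s + t - 1) = (s + (D - 1)) + t := by omega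
          rw [e2, coeff_mul_add_eq_of_natDegree_le
              (natDegree_mul_le.trans (add_le_add hAdeg.le hgder_deg)) hBdeg.le,
            coeff_mul_add_eq_of_natDegree_le hAdeg.le hgder_deg, hAcoeff, hBcoeff, coeff_derivative]
          have e3 : D - 1 + 1 = D := by omega
          rw [e3]
          have e4 : ((D - 1 : ℕ) : ℂ) + 1 = (D : ℂ) := by
            rw [Nat.cast_sub hD1]; ring
          rw [e4]
          ring
      have h3 : (Apoly * g * U).coeff (D + (s + t - 1))
          = g.coeff D * (∑ j, ((l j + n : ℕ) : ℂ)) := by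
        have e1 : D + (s + t - 1) = ((s + D) + (t - 1)) := by omega
        rw [e1, coeff_mul_add_eq_of_natDegree_le (natDegree_mul_le.trans (add_le_add hAdeg.le hgdeg))
            hUdeg, coeff_mul_add_eq_of_natDegree_le hAdeg.le hgdeg, hAcoeff, hUcoeff]
        ring
      have hidx : (n + 1) * (s + t - 1) = D + (s + t - 1) := by rw [hD]; ring
      have hcoeff : g1.coeff ((n + 1) * (s + t - 1))
          = ∏ i ∈ Finset.range (n + 1), ((M : ℂ) - (N : ℂ) - i) := by
        rw [hidx, hg1, coeff_sub, coeff_add, h1, h2, h3, Finset.prod_range_succ, ← hgcoeff]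
        have c1 : ∑ i, ((m i - n : ℕ) : ℂ) = (M : ℂ) - s * n := by
          have hterm : ∀ i : Fin s, ((m i - n : ℕ) : ℂ) = (m i : ℂ) - n := fun i => by
            rw [Nat.cast_sub (le_trans (Nat.le_succ n) (hmn i))]
          rw [Finset.sum_congr rfl (fun i _ => hterm i), Finset.sum_sub_distrib,
            Finset.sum_const, Finset.card_univ, Fintype.card_fin, hM]
          push_cast
          ring
        have c2 : ∑ j, ((l j + n : ℕ) : ℂ) = (N : ℂ) + t * n := by
          push_cast
          rw [Finset.sum_add_distrib, Finset.sum_const, Finset.card_univ, Fintype.card_fin, hN]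
          push_cast
          ring
        have hst1 : (1 : ℕ) ≤ s + t := by omega
        have c3 : (D : ℂ) = n * (s + t) - n := by
          rw [hD]
          push_cast [Nat.cast_sub hst1]
          ring
        rw [c1, c2, c3]
        push_cast [Nat.cast_sub hst1]
        ring
      have hdeg : g1.natDegree ≤ (n + 1) * (s + t - 1) := by
        rw [hidx, hg1]
        refine (natDegree_sub_le _ _).trans (max_le ((natDegree_add_le _ _).trans
          (max_le ?_ ?_)) ?_)
        · calc (T * g * Bpoly).natDegree ≤ (T * g).natDegree + Bpoly.natDegree :=
              natDegree_mul_le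
            _ ≤ T.natDegree + g.natDegree + Bpoly.natDegree :=
              add_le_add natDegree_mul_le le_rfl
            _ ≤ ((s - 1) + D) + t := add_le_add (add_le_add hTdeg hgdeg) hBdeg.le
            _ ≤ D + (s + t - 1) := by omega
        · rcases hDcase with hg0 | hD1
          · rw [hg0]; simp
          · calc (Apoly * derivative g * Bpoly).natDegree
                ≤ (Apoly * derivative g).natDegree + Bpoly.natDegree := natDegree_mul_le
              _ ≤ Apoly.natDegree + (derivative g).natDegree + Bpoly.natDegree :=
                add_le_add natDegree_mul_le le_rfl
              _ ≤ (s + (D - 1)) + t := add_le_add (add_le_add hAdeg.le hgder_deg) hBdeg.le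
              _ ≤ D + (s + t - 1) := by omega
        · calc (Apoly * g * U).natDegree ≤ (Apoly * g).natDegree + U.natDegree :=
              natDegree_mul_le
            _ ≤ Apoly.natDegree + g.natDegree + U.natDegree :=
              add_le_add natDegree_mul_le le_rfl
            _ ≤ (s + D) + (t - 1) := add_le_add (add_le_add hAdeg.le hgdeg) hUdeg
            _ ≤ D + (s + t - 1) := by omega
      -- evaluation claim
      refine ⟨g1, hdeg, hcoeff, ?_⟩
      intro z hz
      set Pn : ℂ[X] := ∏ i, (X - C (a i)) ^ (m i - n) with hPn
      set P1 : ℂ[X] := ∏ i, (X - C (a i)) ^ (m i - (n + 1)) with hP1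
      set Qn : ℂ[X] := ∏ j, (X - C (b j)) ^ (l j + n) with hQn
      set Rpoly : ℂ[X] := ∏ j, (X - C (b j)) ^ (l j + n - 1) with hRpoly
      set p : ℂ[X] := C A * Pn * g with hp
      have hPsplit : Pn = P1 * Apoly := by
        rw [hPn, my_prod_pow_split Finset.univ a (fun i => m i - n)
          (fun i _ => by show 1 ≤ m i - n; have := hmn i; omega), hApoly, hP1]
        simp only [Nat.sub_sub]
      have hPder : derivative Pn = P1 * T := by
        rw [hPn, my_deriv_prod_pow Finset.univ a (fun i => m i - n)
          (fun i _ => by show 1 ≤ m i - n; have := hmn i; omega), hP1, hT]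
        simp only [Nat.sub_sub]
      have hQsplit : Qn = Rpoly * Bpoly := by
        rw [hQn, my_prod_pow_split Finset.univ b (fun j => l j + n)
          (fun j _ => by show 1 ≤ l j + n; have := hl j; omega), hBpoly, hRpoly]
      have hQder : derivative Qn = Rpoly * U := by
        rw [hQn, my_deriv_prod_pow Finset.univ b (fun j => l j + n)
          (fun j _ => by show 1 ≤ l j + n; have := hl j; omega), hRpoly, hU]
      have keyPoly : derivative p * Qn - p * derivative Qn = C A * P1 * g1 * Rpoly := by
        have hdp : derivative p = C A * (derivative Pn * g + Pn * derivative g) := by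
          rw [hp, derivative_mul, derivative_mul, derivative_C]
          ring
        rw [hdp, hPder, hQder, hPsplit, hQsplit, hp, hPsplit, hg1]
        ring
      have hz' : ∀ j, z - b j ≠ 0 := fun j => sub_ne_zero_of_ne (hz j)
      have hBz : Bpoly.eval z ≠ 0 := by
        rw [hBpoly]
        simp only [eval_prod, eval_sub, eval_X, eval_C]
        exact Finset.prod_ne_zero_iff.2 fun j _ => hz' j
      have hRz : Rpoly.eval z ≠ 0 := by
        rw [hRpoly]
        simp only [eval_prod, eval_pow, eval_sub, eval_X, eval_C]
        exact Finset.prod_ne_zero_iff.2 fun j _ => pow_ne_zero _ (hz' j)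
      have hQz : Qn.eval z ≠ 0 := by
        rw [hQsplit, eval_mul]
        exact mul_ne_zero hRz hBz
      have heval : iteratedDeriv n f =ᶠ[nhds z] fun w => p.eval w / Qn.eval w := by
        filter_upwards [hOpen.mem_nhds hz] with w hw
        rw [hgval w hw, hp, hPn, hQn]
        simp only [eval_mul, eval_C, eval_prod, eval_pow, eval_sub, eval_X]
      rw [iteratedDeriv_succ, heval.deriv_eq,
        deriv_fun_div (Polynomial.differentiableAt p) (Polynomial.differentiableAt Qn) hQz,
        Polynomial.deriv, Polynomial.deriv]
      have hnum : eval z (derivative p) * eval z Qn - eval z p * eval z (derivative Qn)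
          = A * P1.eval z * g1.eval z * Rpoly.eval z := by
        have h := congrArg (eval z) keyPoly
        simpa [eval_mul, eval_sub, eval_C] using h
      rw [hnum]
      have hP1z : P1.eval z = ∏ i, (z - a i) ^ (m i - (n + 1)) := by
        rw [hP1]; simp [eval_prod]
      have hQz2 : Qn.eval z = Rpoly.eval z * Bpoly.eval z := by rw [hQsplit, eval_mul]
      have hden : ∏ j, (z - b j) ^ (l j + (n + 1))
          = Rpoly.eval z * (Bpoly.eval z * Bpoly.eval z) := by
        rw [hRpoly, hBpoly]
        simp only [eval_prod, eval_pow, eval_sub, eval_X, eval_C]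
        rw [← Finset.prod_mul_distrib, ← Finset.prod_mul_distrib]
        refine Finset.prod_congr rfl fun j _ => ?_
        have h2 : l j + (n + 1) = (l j + n - 1) + 2 := by have := hl j; omega
        rw [h2, pow_add]
        ring
      rw [hP1z, hQz2, hden]
      field_simp
  obtain ⟨gk, hh1, hh2, hh3⟩ := key k le_rfl
  exact ⟨gk, hh1, hh2, hh3⟩
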